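/- (Proposition 1, agent-wise factorization of witness probabilities.) Consider a homogeneous multi-agent system of N agents sharing a finite labeled controlled Markov chain (X_c, A_c, T_c, L_c : X_c → Σ_c), with per-agent time-varying policies π^i : ℕ → X_c → A_c for i ∈ Fin N. Let t ∈ ℕ, let l : Fin (t+1) → (Fin N → Σ_c) be a joint word, and let x_0 : Fin N → X_c be an initial joint state. Then ∑_{x} ∏_{k=0}^{t-1} ∏_{i} T_c(x k i, π^i(k)(x k i), x (k+1) i) = ∏_{i} P(l^i, x_0 i, π^i), where the outer sum ranges over all joint paths x : Fin (t+1) → (Fin N → X_c) with x 0 = x_0 and L_c(x k i) = l k i for all k and i, l^i : Fin (t+1) → Σ_c denotes the projection k ↦ l k i, and P(l^i, x_0 i, π^i) is the per-agent witness probability. -/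

import Mathlib

open scoped Classical

/-- Per-agent witness probability: the probability that the controlled single-agent
chain started at `y0` generates the word `l` over the first `t+1` steps. -/
noncomputable def witnessP {Xc Ac Sc : Type*} [Fintype Xc]
    (Tc : Xc → Ac → Xc → NNReal) (Lc : Xc → Sc) (π : ℕ → Xc → Ac)
    (t : ℕ) (l : Fin (t + 1) → Sc) (y0 : Xc) : NNReal :=
  ∑ y : Fin (t + 1) → Xc,
    (if y 0 = y0 ∧ (∀ k : Fin (t + 1), Lc (y k) = l k) then 1 else 0) *
      ∏ k : Fin t, Tc (y k.castSucc) (π k.val (y k.castSucc)) (y k.succ)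

theorem witness_probability_factorizes {Xc Ac Sc : Type*} [Fintype Xc]
    (Tc : Xc → Ac → Xc → NNReal) (Lc : Xc → Sc)
    (hrow : ∀ x a, ∑ x' : Xc, Tc x a x' = 1)
    (N : ℕ) (π : Fin N → ℕ → Xc → Ac) (t : ℕ)
    (l : Fin (t + 1) → Fin N → Sc) (x0 : Fin N → Xc) :
    (∑ x : Fin (t + 1) → Fin N → Xc,
        (if x 0 = x0 ∧ (∀ (k : Fin (t + 1)) (i : Fin N), Lc (x k i) = l k i) then 1 else 0) *
          ∏ k : Fin t, ∏ i : Fin N,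
            Tc (x k.castSucc i) (π i k.val (x k.castSucc i)) (x k.succ i))
      = ∏ i : Fin N, witnessP Tc Lc (π i) t (fun k => l k i) (x0 i) := by
  unfold witnessP
  rw [Fintype.prod_sum]
  refine Fintype.sum_equiv (Equiv.piComm fun _ _ => Xc) _ _ ?_
  intro x
  simp only [Equiv.piComm_apply, Function.swap]
  rw [Finset.prod_mul_distrib, Finset.prod_boole, Finset.prod_comm]
  congr 1
  congr 1
  simp only [Finset.mem_univ, forall_true_left]
  rw [eq_iff_iff]
  constructor
  · rintro ⟨h0, hL⟩ i; exact ⟨congrFun h0 i, fun k => hL k i⟩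
  · intro h; exact ⟨funext fun i => (h i).1, fun k i => (h i).2 k⟩
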